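/- Let S be a numerical semigroup and d a positive divisor of gcd(L'(S)), where L'(S) is the extended set of left elements. Then the quotient S/d = {x ∈ ℕ : dx ∈ S} equals (1/d)·L(S) ∪ (F(S)/d, ∞), where L(S) = S ∩ [0, F(S)). In particular S/d is a numerical semigroup with Frobenius number F(S)/d. -/
import Mathlib


/-- A numerical semigroup: a cofinite additive submonoid of ℕ containing 0. -/
structure NumericalSemigroup where
  carrier : Set ℕ
  zero_mem : 0 ∈ carrier
  add_mem : ∀ ⦃a b : ℕ⦄, a ∈ carrier → b ∈ carrier → a + b ∈ carrier
  cofinite : (carrierᶜ : Set ℕ).Finite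

namespace NumericalSemigroup

/-- The primitives (minimal generators): nonzero elements not expressible as a sum
of two nonzero elements. -/
def primitives (S : NumericalSemigroup) : Set ℕ :=
  {x | x ∈ S.carrier ∧ x ≠ 0 ∧
    ¬ ∃ a b : ℕ, a ∈ S.carrier ∧ b ∈ S.carrier ∧ a ≠ 0 ∧ b ≠ 0 ∧ x = a + b}

/-- The maximum primitive. -/
noncomputable def maxPrim (S : NumericalSemigroup) : ℕ := sSup (primitives S)

/-- The multiplicity: the least primitive (= least nonzero element). -/
noncomputable def multiplicity (S : NumericalSemigroup) : ℕ := sInf (primitives S)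

/-- The Frobenius number: the largest gap (0 for ℕ by convention here). -/
noncomputable def frob (S : NumericalSemigroup) : ℕ := sSup (S.carrierᶜ)

/-- The set of left elements. -/
noncomputable def lefts (S : NumericalSemigroup) : Set ℕ := S.carrier ∩ Set.Iio (frob S)

/-- The extended set of left elements. -/
noncomputable def extLefts (S : NumericalSemigroup) : Set ℕ := lefts S ∪ {frob S}

end NumericalSemigroup

open NumericalSemigroup

/-- The gcd of a set of naturals: the greatest common divisor of all its elements. -/
noncomputable def setGcd (A : Set ℕ) : ℕ := sSup {d | ∀ x ∈ A, d ∣ x}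

/-- The number of numerical semigroups with maximum primitive `n`. -/
noncomputable def countMaxPrim (n : ℕ) : ℕ :=
  {S : NumericalSemigroup | maxPrim S = n}.ncard

/-- The number of numerical semigroups with Frobenius number `n`. -/
noncomputable def countFrob (n : ℕ) : ℕ :=
  {S : NumericalSemigroup | frob S = n}.ncard

theorem quotient_by_ext_left_divisor (S : NumericalSemigroup)
    (hS : S.carrier ≠ Set.univ) (d : ℕ) (hd : 0 < d)
    (hdvd : d ∣ setGcd (extLefts S)) :
    {x : ℕ | d * x ∈ S.carrier}
        = (fun s => s / d) '' lefts S ∪ Set.Ioi (frob S / d) ∧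
    ∃ T : NumericalSemigroup, T.carrier = {x : ℕ | d * x ∈ S.carrier} ∧
        frob T = frob S / d := by
  -- basic facts
  have hFne : (S.carrierᶜ : Set ℕ).Nonempty := by
    rcases Set.ne_univ_iff_exists_notMem _ |>.mp hS with ⟨y, hy⟩
    exact ⟨y, hy⟩
  have hbdd : BddAbove (S.carrierᶜ : Set ℕ) := S.cofinite.bddAbove
  have hFmem : frob S ∈ (S.carrierᶜ : Set ℕ) := Nat.sSup_mem hFne hbdd
  have hFnot : frob S ∉ S.carrier := hFmem
  have hFpos : 0 < frob S := by
    rcases Nat.eq_zero_or_pos (frob S) with h | h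
    · exact absurd (h ▸ S.zero_mem) hFnot
    · exact h
  have hgt : ∀ n, frob S < n → n ∈ S.carrier := by
    intro n hn
    by_contra hns
    exact absurd (le_csSup hbdd hns) (not_le.mpr hn)
  -- d divides every extended left element
  have hgmem : setGcd (extLefts S) ∈ {e | ∀ x ∈ extLefts S, e ∣ x} := by
    apply Nat.sSup_mem
    · exact ⟨1, fun x _ => one_dvd x⟩
    · refine ⟨frob S, fun e he => ?_⟩
      exact Nat.le_of_dvd hFpos (he (frob S) (Or.inr rfl))
  have hdvd' : ∀ x ∈ extLefts S, d ∣ x := fun x hx => hdvd.trans (hgmem x hx)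
  have hdF : d ∣ frob S := hdvd' _ (Or.inr rfl)
  have hdFeq : d * (frob S / d) = frob S := Nat.mul_div_cancel' hdF
  have hseteq : {x : ℕ | d * x ∈ S.carrier}
      = (fun s => s / d) '' lefts S ∪ Set.Ioi (frob S / d) := by
    ext x
    constructor
    · intro hx
      rcases lt_or_ge (d * x) (frob S) with h | h
      · exact Or.inl ⟨d * x, ⟨hx, h⟩, Nat.mul_div_cancel_left x hd⟩
      · have hne : d * x ≠ frob S := fun he => hFnot (he ▸ hx)
        have hlt : frob S < d * x := lt_of_le_of_ne h (Ne.symm hne)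
        refine Or.inr ?_
        have : d * (frob S / d) < d * x := by rw [hdFeq]; exact hlt
        exact Nat.lt_of_mul_lt_mul_left this
    · rintro (⟨s, ⟨hsS, hslt⟩, rfl⟩ | hx)
      · have hds : d ∣ s := hdvd' s (Or.inl ⟨hsS, hslt⟩)
        show d * (s / d) ∈ S.carrier
        rw [Nat.mul_div_cancel' hds]; exact hsS
      · have : frob S < d * x := by
          calc frob S = d * (frob S / d) := hdFeq.symm
          _ < d * x := (Nat.mul_lt_mul_left hd).mpr hx
        exact hgt _ this
  refine ⟨hseteq, ?_⟩
  have hcompl : ({x : ℕ | d * x ∈ S.carrier}ᶜ : Set ℕ) ⊆ Set.Iic (frob S / d) := by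
    intro x hx
    by_contra h
    exact hx (hgt _ (by
      calc frob S = d * (frob S / d) := hdFeq.symm
      _ < d * x := (Nat.mul_lt_mul_left hd).mpr (not_le.mp h)))
  refine ⟨⟨{x : ℕ | d * x ∈ S.carrier}, by simpa using S.zero_mem,
      fun a b ha hb => by
        show d * (a + b) ∈ S.carrier
        rw [Nat.mul_add]; exact S.add_mem ha hb,
      (Set.finite_Iic _).subset hcompl⟩, rfl, ?_⟩
  have hFdnot : frob S / d ∈ ({x : ℕ | d * x ∈ S.carrier}ᶜ : Set ℕ) := by
    simp only [Set.mem_compl_iff, Set.mem_setOf_eq, hdFeq]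
    exact hFnot
  show sSup _ = frob S / d
  exact le_antisymm (csSup_le ⟨_, hFdnot⟩ hcompl)
    (le_csSup ⟨frob S / d, hcompl⟩ hFdnot)
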